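/- Let p be an odd prime and n a natural number with p^{2l} | n. Then A(p^{2l+1}; n) = p^{−l−3} (p·T(n/p^{2l}) − p³), where T(m) denotes the number of triples (x₁,x₂,x₃) with 1 ≤ x_i ≤ p and x₁²+x₂²+x₃² ≡ m (mod p). -/

import Mathlib

open Finset

/-- `e z = exp(2 π i z)`. -/
noncomputable def e (z : ℝ) : ℂ := Complex.exp (2 * Real.pi * Complex.I * z)

/-- The quadratic Gauss sum `S(q,a) = ∑_{r=1}^{q} e(a r² / q)`. -/
noncomputable def S (q : ℕ) (a : ℤ) : ℂ :=
  ∑ r ∈ Finset.Icc 1 q, e ((a : ℝ) * (r : ℝ) ^ 2 / (q : ℝ))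

/-- `A(q;n) = ∑_{1 ≤ a ≤ q, gcd(a,q)=1} q⁻³ S(q,a)³ e(-n a / q)` (so `A(1;n)=1`). -/
noncomputable def A (q n : ℕ) : ℂ :=
  ∑ a ∈ (Finset.Icc 1 q).filter (fun a => Nat.gcd a q = 1),
    (q : ℂ) ^ (-(3 : ℤ)) * S q (a : ℤ) ^ 3 * e (-((n : ℝ) * (a : ℝ) / (q : ℝ)))

/-- `T(m)`: the number of triples `(x₁,x₂,x₃)` with `1 ≤ xᵢ ≤ p` and
`x₁² + x₂² + x₃² ≡ m (mod p)`. -/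
noncomputable def Tcount (p : ℕ) (m : ℤ) : ℕ :=
  Finset.card <| Finset.filter
    (fun x : ℤ × ℤ × ℤ => (x.1 ^ 2 + x.2.1 ^ 2 + x.2.2 ^ 2) % (p : ℤ) = m % (p : ℤ))
    (Finset.Icc (1 : ℤ) (p : ℤ) ×ˢ Finset.Icc (1 : ℤ) (p : ℤ) ×ˢ Finset.Icc (1 : ℤ) (p : ℤ))

lemma e_add (x y : ℝ) : e (x + y) = e x * e y := by
  simp only [e, Complex.ofReal_add, mul_add, Complex.exp_add]

lemma e_int (m : ℤ) : e m = 1 := by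
  simp only [e]
  rw [show ((2:ℂ) * Real.pi * Complex.I * ((m:ℝ):ℂ)) = (m : ℤ) * (2 * Real.pi * Complex.I) by push_cast; ring]
  exact Complex.exp_int_mul_two_pi_mul_I m

noncomputable def ep (q : ℕ) (m : ℤ) : ℂ := e ((m : ℝ) / q)

lemma ep_add (q : ℕ) (m m' : ℤ) : ep q (m + m') = ep q m * ep q m' := by
  rw [ep, ep, ep, ← e_add]; congr 1; push_cast; ring

lemma ep_qmul (q : ℕ) (m : ℤ) : ep q ((q : ℤ) * m) = 1 := by
  rcases Nat.eq_zero_or_pos q with h | h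
  · subst h; simp [ep, e]
  · rw [ep, show (((q:ℤ) * m : ℤ) : ℝ) / q = (m : ℝ) by push_cast; field_simp]
    exact e_int m

lemma ep_zero (q : ℕ) : ep q 0 = 1 := by simp [ep, e]

lemma ep_pow_nat (q : ℕ) (m : ℤ) (b : ℕ) : ep q (m * b) = (ep q m) ^ b := by
  induction b with
  | zero => simpa using ep_zero q
  | succ b ih =>
    rw [pow_succ, ← ih, ← ep_add]
    congr 1; push_cast; ring

lemma ep_eq_one_iff (q : ℕ) (hq : 0 < q) (m : ℤ) : ep q m = 1 ↔ (q : ℤ) ∣ m := by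
  rw [ep, e, Complex.exp_eq_one_iff]
  constructor
  · rintro ⟨n, hn⟩
    have h2 : (2 * Real.pi * Complex.I) ≠ 0 := by
      simp [Real.pi_ne_zero, Complex.I_ne_zero]
    rw [mul_comm ((n:ℂ)) _] at hn
    have : (((m:ℝ)/q : ℝ) : ℂ) = (n : ℂ) := mul_left_cancel₀ h2 hn
    have hr : (m : ℝ) / q = (n : ℝ) := by exact_mod_cast this
    refine ⟨n, ?_⟩
    have hq' : (q : ℝ) ≠ 0 := Nat.cast_ne_zero.2 hq.ne'
    have : (m : ℝ) = (q : ℝ) * n := by field_simp at hr; linarith [hr]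
    exact_mod_cast this
  · rintro ⟨c, rfl⟩
    refine ⟨c, ?_⟩
    have hq' : (q : ℝ) ≠ 0 := Nat.cast_ne_zero.2 hq.ne'
    rw [show (((q : ℤ) * c : ℤ) : ℝ) / q = (c : ℝ) by push_cast; field_simp]
    push_cast; ring

lemma sum_ep_mul (q : ℕ) (hq : 0 < q) (k : ℤ) :
    ∑ b ∈ range q, ep q (k * b) = if (q:ℤ) ∣ k then (q:ℂ) else 0 := by
  have hpow : ∀ b : ℕ, ep q (k * b) = (ep q k) ^ b := fun b => ep_pow_nat q k b
  simp_rw [hpow]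
  by_cases h : (q:ℤ) ∣ k
  · rw [if_pos h, (ep_eq_one_iff q hq k).2 h]; simp
  · rw [if_neg h]
    have h1 : ep q k ≠ 1 := fun hh => h ((ep_eq_one_iff q hq k).1 hh)
    rw [geom_sum_eq h1]
    have : ep q k ^ q = 1 := by
      rw [← ep_pow_nat, mul_comm]; exact ep_qmul q k
    simp [this]

lemma sum_Icc_eq_range (q : ℕ) (hq : 0 < q) (f : ℕ → ℂ) (hf : f q = f 0) :
    ∑ r ∈ Icc 1 q, f r = ∑ r ∈ range q, f r := by
  rw [← Finset.Ico_add_one_right_eq_Icc, Finset.sum_Ico_succ_top (by omega), hf, Finset.range_eq_Ico,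
    Finset.sum_eq_sum_Ico_succ_bot hq]
  ring

lemma shift_periodic (p : ℕ) (f : ℕ → ℂ) (hf : ∀ a, f (a + p) = f a) (N b : ℕ) :
    f (N * p + b) = f b := by
  induction N with
  | zero => simp
  | succ N ihN =>
    rw [show (N+1) * p + b = (N * p + b) + p by ring, hf, ihN]

lemma sum_range_mul_periodic (p N : ℕ) (f : ℕ → ℂ) (hf : ∀ a, f (a + p) = f a) :
    ∑ r ∈ range (N * p), f r = N * ∑ b ∈ range p, f b := by
  induction N with
  | zero => simp
  | succ N ih =>
    have h2 : ∑ i ∈ Ico (N*p) (N*p+p), f i = ∑ b ∈ range p, f b := by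
      rw [Finset.sum_Ico_eq_sum_range]
      have hb : N * p + p - N * p = p := by omega
      rw [hb]
      exact Finset.sum_congr rfl fun b _ => shift_periodic p f hf N b
    rw [Nat.succ_mul, Finset.range_eq_Ico,
      ← Finset.sum_Ico_consecutive _ (Nat.zero_le (N*p)) (Nat.le_add_right _ _), h2,
      ← Finset.range_eq_Ico, ih]
    push_cast; ring

lemma sum_range_mul_digits (M p : ℕ) (hM : 0 < M) (f : ℕ → ℂ) :
    ∑ r ∈ range (M * p), f r = ∑ s ∈ range M, ∑ t ∈ range p, f (s + M * t) := by
  rw [← Finset.sum_product']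
  apply Finset.sum_nbij' (i := fun r => (r % M, r / M)) (j := fun st => st.1 + M * st.2)
  · intro r hr
    simp only [Finset.mem_product, Finset.mem_range] at *
    exact ⟨Nat.mod_lt _ hM, Nat.div_lt_iff_lt_mul hM |>.2 (by rw [mul_comm]; exact hr)⟩
  · intro st hst
    simp only [Finset.mem_product, Finset.mem_range] at *
    calc st.1 + M * st.2 < M + M * st.2 := by omega
    _ = M * (st.2 + 1) := by ring
    _ ≤ M * p := Nat.mul_le_mul_left M hst.2
  · intro r hr; simp [Nat.mod_add_div]
  · intro st hst
    simp only [Finset.mem_product, Finset.mem_range] at hst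
    simp [Nat.add_mul_div_left _ _ hM, Nat.mod_eq_of_lt hst.1, Nat.div_eq_of_lt hst.1,
      Nat.add_mul_mod_self_left]
  · intro r hr; rw [Nat.mod_add_div]

lemma ep_scale (c q : ℕ) (hc : c ≠ 0) (m : ℤ) : ep (c * q) ((c : ℤ) * m) = ep q m := by
  rcases Nat.eq_zero_or_pos q with h | h
  · subst h; simp [ep, e]
  · rw [ep, ep]
    congr 1
    have hc' : (c:ℝ) ≠ 0 := Nat.cast_ne_zero.2 hc
    have hq' : (q:ℝ) ≠ 0 := Nat.cast_ne_zero.2 h.ne'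
    push_cast
    field_simp

lemma S_eq_range (q : ℕ) (hq : 0 < q) (a : ℤ) :
    S q a = ∑ r ∈ range q, ep q (a * (r:ℤ)^2) := by
  have h1 : ∀ r : ℕ, e ((a:ℝ) * (r:ℝ)^2 / q) = ep q (a * (r:ℤ)^2) := by
    intro r; rw [ep]; congr 1; push_cast; ring
  rw [S]
  simp_rw [h1]
  apply sum_Icc_eq_range q hq
  have h2 : a * (q:ℤ)^2 = (q:ℤ) * (a * q) := by ring
  rw [h2, ep_qmul]
  simp [ep_zero]

lemma S_rec (p K : ℕ) (hp : p.Prime) (hodd : Odd p) (a : ℤ) (ha : ¬ (p:ℤ) ∣ a) :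
    S (p^(K+2)) a = p * S (p^K) a := by
  have hp0 : 0 < p := hp.pos
  have hM : 0 < p^(K+1) := pow_pos hp0 _
  have hK : 0 < p^K := pow_pos hp0 _
  have hpP : Prime (p : ℤ) := Nat.prime_iff_prime_int.1 hp
  have hp2 : ¬ (p:ℤ) ∣ 2 := by
    intro h
    have h' : p ∣ 2 := by exact_mod_cast h
    have := (Nat.prime_dvd_prime_iff_eq hp Nat.prime_two).1 h'
    rw [this] at hodd
    exact (Nat.not_odd_iff_even.2 even_two) hodd
  rw [S_eq_range _ (pow_pos hp0 _), S_eq_range _ (pow_pos hp0 _)]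
  have hsplit : p^(K+2) = p^(K+1) * p := by ring
  rw [hsplit, sum_range_mul_digits _ _ hM]
  have hterm : ∀ s : ℕ, ∀ t : ℕ,
      ep (p^(K+1) * p) (a * ((s + p^(K+1) * t : ℕ) : ℤ)^2)
        = ep (p^(K+1) * p) (a * (s:ℤ)^2) * ep p ((2 * a * (s:ℤ)) * (t:ℤ)) := by
    intro s t
    have h1 : a * ((s + p^(K+1) * t : ℕ) : ℤ)^2
        = a * (s:ℤ)^2 + ((p^(K+1) : ℕ) : ℤ) * (a * (2*(s:ℤ)*(t:ℤ) + ((p^(K+1):ℕ):ℤ) * (t:ℤ)^2)) := by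
      push_cast; ring
    rw [h1, ep_add]
    congr 1
    rw [ep_scale _ _ hM.ne']
    have h2 : a * (2*(s:ℤ)*(t:ℤ) + ((p^(K+1):ℕ):ℤ) * (t:ℤ)^2)
        = (2 * a * (s:ℤ)) * (t:ℤ) + (p:ℤ) * (a * ((p^K:ℕ):ℤ) * (t:ℤ)^2) := by
      push_cast; ring
    rw [h2, ep_add, ep_qmul, mul_one]
  simp_rw [hterm]
  have hinner : ∀ s : ℕ,
      ∑ t ∈ range p, ep (p^(K+1) * p) (a * (s:ℤ)^2) * ep p ((2 * a * (s:ℤ)) * (t:ℤ))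
        = if p ∣ s then (p:ℂ) * ep (p^(K+1) * p) (a * (s:ℤ)^2) else 0 := by
    intro s
    rw [← Finset.mul_sum, sum_ep_mul p hp0]
    have hdvd : (p:ℤ) ∣ 2 * a * (s:ℤ) ↔ p ∣ s := by
      rw [hpP.dvd_mul, hpP.dvd_mul]
      simp only [hp2, ha, false_or]
      exact Int.natCast_dvd_natCast
    by_cases h : p ∣ s
    · rw [if_pos ((hdvd).2 h), if_pos h]; ring
    · rw [if_neg (fun hh => h (hdvd.1 hh)), if_neg h, mul_zero]
  simp_rw [hinner]
  rw [Finset.sum_ite, Finset.sum_const_zero, add_zero]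
  have himage : (range (p^(K+1))).filter (fun s => p ∣ s) = (range (p^K)).image (fun u => p * u) := by
    ext s
    simp only [Finset.mem_filter, Finset.mem_range, Finset.mem_image]
    constructor
    · rintro ⟨hs, u, rfl⟩
      exact ⟨u, by rw [pow_succ'] at hs; exact lt_of_mul_lt_mul_left hs (Nat.zero_le p), rfl⟩
    · rintro ⟨u, hu, rfl⟩
      exact ⟨by rw [pow_succ']; exact (Nat.mul_lt_mul_left hp0).2 hu, ⟨u, rfl⟩⟩
  rw [himage, Finset.sum_image (by intros x _ y _ h; exact Nat.eq_of_mul_eq_mul_left hp0 h)]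
  rw [Finset.mul_sum]
  apply Finset.sum_congr rfl
  intro u _
  congr 1
  have h3 : a * ((p * u : ℕ) : ℤ)^2 = ((p^2 : ℕ) : ℤ) * (a * (u:ℤ)^2) := by push_cast; ring
  have h4 : p^(K+1) * p = p^2 * p^K := by ring
  rw [h3, h4, ep_scale _ _ (pow_pos hp0 2).ne']

lemma S_pow (p : ℕ) (hp : p.Prime) (hodd : Odd p) (a : ℤ) (ha : ¬ (p:ℤ) ∣ a) (l : ℕ) :
    S (p^(2*l+1)) a = (p:ℂ)^l * S p a := by
  induction l with
  | zero => norm_num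
  | succ l ih =>
    have h1 : 2*(l+1)+1 = (2*l+1)+2 := by ring
    rw [h1, S_rec p (2*l+1) hp hodd a ha, ih]
    ring

lemma S_period (q : ℕ) (hq : 0 < q) (b : ℤ) : S q (b + q) = S q b := by
  unfold S
  apply Finset.sum_congr rfl
  intro r _
  have hq' : (q:ℝ) ≠ 0 := Nat.cast_ne_zero.2 hq.ne'
  rw [show (((b + q : ℤ)):ℝ) * (r:ℝ)^2 / q = (b:ℝ)*(r:ℝ)^2/q + (((r^2 : ℕ) : ℤ) : ℝ) by
    push_cast; field_simp]
  rw [e_add, e_int, mul_one]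

lemma count_eq_Tcount (p : ℕ) (hp : 0 < p) (m : ℤ) :
    ((range p ×ˢ range p ×ˢ range p).filter
      (fun x : ℕ × ℕ × ℕ => (p:ℤ) ∣ ((x.1:ℤ)^2 + (x.2.1:ℤ)^2 + (x.2.2:ℤ)^2 - m))).card
    = Tcount p m := by
  classical
  set g : ℕ → ℤ := fun r => if r = 0 then (p:ℤ) else (r:ℤ) with hgdef
  set h : ℤ → ℕ := fun x => if x = (p:ℤ) then 0 else x.toNat with hhdef
  have hg1 : ∀ r : ℕ, r < p → g r ∈ Finset.Icc (1:ℤ) (p:ℤ) := by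
    intro r hr
    simp only [hgdef, Finset.mem_Icc]
    split
    · omega
    · constructor <;> [omega; exact_mod_cast hr.le]
  have hg2 : ∀ r : ℕ, g r ≡ (r:ℤ) [ZMOD p] := by
    intro r
    simp only [hgdef]
    split
    · subst ‹r = 0›
      simp only [Nat.cast_zero]
      exact (Int.modEq_iff_dvd).2 (by simp)
    · rfl
  have hh1 : ∀ x ∈ Finset.Icc (1:ℤ) (p:ℤ), h x < p ∧ (h x : ℤ) ≡ x [ZMOD p] ∧ g (h x) = x := by
    intro x hx
    simp only [Finset.mem_Icc] at hx
    simp only [hhdef, hgdef]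
    split
    · subst ‹x = (p:ℤ)›
      refine ⟨hp, ?_, by simp⟩
      simp only [Nat.cast_zero]
      exact (Int.modEq_iff_dvd).2 (by simp)
    · have hxp : x < (p:ℤ) := lt_of_le_of_ne hx.2 ‹¬ x = (p:ℤ)›
      have h1 : x.toNat < p := by omega
      have h2 : ((x.toNat : ℕ) : ℤ) = x := Int.toNat_of_nonneg (by omega)
      refine ⟨h1, by rw [h2], ?_⟩
      split
      · exfalso; omega
      · exact h2
  have hQ : ∀ (a b : ℤ), a ≡ b [ZMOD p] → ∀ (c d : ℤ), c ≡ d [ZMOD p] →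
      ∀ (u v : ℤ), u ≡ v [ZMOD p] →
      (a^2 + c^2 + u^2) ≡ (b^2 + d^2 + v^2) [ZMOD p] := by
    intro a b hab c d hcd u v huv
    exact ((hab.pow 2).add (hcd.pow 2)).add (huv.pow 2)
  rw [Tcount]
  apply Finset.card_bij' (i := fun x _ => ((g x.1, g x.2.1, g x.2.2) : ℤ × ℤ × ℤ))
    (j := fun x _ => ((h x.1, h x.2.1, h x.2.2) : ℕ × ℕ × ℕ))
  · rintro ⟨a, b, c⟩ hx
    simp only [Finset.mem_filter, Finset.mem_product, Finset.mem_range] at hx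
    obtain ⟨⟨ha, hb, hc⟩, hdvd⟩ := hx
    simp only [Finset.mem_filter, Finset.mem_product]
    refine ⟨⟨hg1 a ha, hg1 b hb, hg1 c hc⟩, ?_⟩
    have h1 : (g a)^2 + (g b)^2 + (g c)^2 ≡ (a:ℤ)^2 + (b:ℤ)^2 + (c:ℤ)^2 [ZMOD p] :=
      hQ _ _ (hg2 a) _ _ (hg2 b) _ _ (hg2 c)
    have h2 : ((a:ℤ)^2 + (b:ℤ)^2 + (c:ℤ)^2) ≡ m [ZMOD p] := by
      rw [Int.modEq_iff_dvd, show m - ((a:ℤ)^2 + (b:ℤ)^2 + (c:ℤ)^2) = -(((a:ℤ)^2 + (b:ℤ)^2 + (c:ℤ)^2) - m) by ring]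
      exact dvd_neg.2 hdvd
    exact h1.trans h2
  · rintro ⟨a, b, c⟩ hx
    simp only [Finset.mem_filter, Finset.mem_product] at hx
    obtain ⟨⟨ha, hb, hc⟩, hmod⟩ := hx
    obtain ⟨ha1, ha2, -⟩ := hh1 a ha
    obtain ⟨hb1, hb2, -⟩ := hh1 b hb
    obtain ⟨hc1, hc2, -⟩ := hh1 c hc
    simp only [Finset.mem_filter, Finset.mem_product, Finset.mem_range]
    refine ⟨⟨ha1, hb1, hc1⟩, ?_⟩
    have h1 : ((h a : ℤ)^2 + (h b : ℤ)^2 + (h c : ℤ)^2) ≡ m [ZMOD p] :=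
      (hQ _ _ ha2 _ _ hb2 _ _ hc2).trans hmod
    rw [Int.modEq_iff_dvd, show m - ((h a : ℤ)^2 + (h b : ℤ)^2 + (h c : ℤ)^2) = -(((h a :ℤ)^2 + (h b :ℤ)^2 + (h c :ℤ)^2) - m) by ring] at h1
    exact dvd_neg.1 h1
  · rintro ⟨a, b, c⟩ hx
    simp only [Finset.mem_filter, Finset.mem_product, Finset.mem_range] at hx
    obtain ⟨⟨ha, hb, hc⟩, -⟩ := hx
    have key : ∀ r : ℕ, r < p → h (g r) = r := by
      intro r hr
      simp only [hgdef, hhdef]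
      split
      · simp [‹r = 0›]
      · have : (r:ℤ) ≠ (p:ℤ) := by exact_mod_cast (by omega : r ≠ p)
        simp [this]
    simp [key a ha, key b hb, key c hc]
  · rintro ⟨a, b, c⟩ hx
    simp only [Finset.mem_filter, Finset.mem_product] at hx
    obtain ⟨⟨ha, hb, hc⟩, -⟩ := hx
    obtain ⟨-, -, ha3⟩ := hh1 a ha
    obtain ⟨-, -, hb3⟩ := hh1 b hb
    obtain ⟨-, -, hc3⟩ := hh1 c hc
    simp [ha3, hb3, hc3]

lemma sum_cube (s : Finset ℕ) (F : ℕ → ℂ) :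
    (∑ r ∈ s, F r)^3 = ∑ x ∈ s ×ˢ s ×ˢ s, F x.1 * F x.2.1 * F x.2.2 := by
  rw [Finset.sum_product]
  simp_rw [Finset.sum_product]
  rw [pow_succ, pow_two, Finset.sum_mul_sum, Finset.sum_mul]
  apply Finset.sum_congr rfl; intro a _
  rw [Finset.sum_mul]
  apply Finset.sum_congr rfl; intro b _
  rw [Finset.mul_sum]


theorem A_odd_prime_power_count (p : ℕ) (hp : p.Prime) (hodd : Odd p) (n l : ℕ)
    (hdvd : p ^ (2 * l) ∣ n) :
    A (p ^ (2 * l + 1)) n =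
      (p : ℂ) ^ (-(l : ℤ) - 3) *
        ((p : ℂ) * (Tcount p ((n / p ^ (2 * l) : ℕ) : ℤ) : ℂ) - (p : ℂ) ^ 3) := by
  classical
  have hp0 : 0 < p := hp.pos
  have hpC : (p:ℂ) ≠ 0 := Nat.cast_ne_zero.2 hp0.ne'
  set m : ℕ := n / p^(2*l) with hmdef
  have hn : p^(2*l) * m = n := Nat.mul_div_cancel' hdvd
  have hq0 : 0 < p^(2*l+1) := pow_pos hp0 _
  set g : ℕ → ℂ := fun b => S p (b:ℤ)^3 * ep p (-((m:ℤ) * b)) with hgdef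
  set f : ℕ → ℂ := fun b => if Nat.Coprime b p then g b else 0 with hfdef
  set Cst : ℂ := ((p^(2*l+1) : ℕ):ℂ)^(-(3:ℤ)) * ((p:ℂ)^l)^3 with hCdef
  have hcond : ∀ b : ℕ, Nat.Coprime b p ↔ ¬ p ∣ b := by
    intro b
    constructor
    · intro h; exact (hp.coprime_iff_not_dvd).1 h.symm
    · intro h; exact ((hp.coprime_iff_not_dvd).2 h).symm
  -- Step 1
  have hstep1 : A (p^(2*l+1)) n = Cst * ∑ b ∈ range (p^(2*l+1)), f b := by
    rw [A, Finset.sum_filter]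
    have hterm : ∀ a ∈ Finset.Icc 1 (p^(2*l+1)),
        (if Nat.gcd a (p^(2*l+1)) = 1 then
          ((p^(2*l+1):ℕ) : ℂ) ^ (-(3 : ℤ)) * S (p^(2*l+1)) (a : ℤ) ^ 3 *
            e (-((n : ℝ) * (a : ℝ) / ((p^(2*l+1):ℕ) : ℝ))) else 0) = Cst * f a := by
      intro a _
      by_cases hc : Nat.gcd a (p^(2*l+1)) = 1
      · rw [if_pos hc]
        have hcop : Nat.Coprime a p :=
          Nat.Coprime.coprime_dvd_right (dvd_pow_self p (Nat.succ_ne_zero (2*l))) hc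
        have ha' : ¬ (p:ℤ) ∣ (a:ℤ) := by
          rw [Int.natCast_dvd_natCast]
          exact (hcond a).1 hcop
        have hS : S (p^(2*l+1)) (a:ℤ) = (p:ℂ)^l * S p (a:ℤ) := S_pow p hp hodd (a:ℤ) ha' l
        have hE : e (-((n : ℝ) * (a : ℝ) / ((p^(2*l+1):ℕ) : ℝ))) = ep p (-((m:ℤ) * a)) := by
          have h1 : e (-((n : ℝ) * (a : ℝ) / ((p^(2*l+1):ℕ) : ℝ)))
              = ep (p^(2*l+1)) (-((n:ℤ) * a)) := by
            rw [ep]; congr 1; push_cast; ring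
          rw [h1, show p^(2*l+1) = p^(2*l) * p from pow_succ p (2*l),
            show -((n:ℤ) * a) = ((p^(2*l) : ℕ) : ℤ) * (-((m:ℤ) * a)) by
              rw [← hn]; push_cast; ring,
            ep_scale _ _ (pow_pos hp0 (2*l)).ne']
        rw [hS, hE, hfdef]
        simp only [if_pos hcop]
        rw [hgdef, hCdef]
        ring
      · rw [if_neg hc, hfdef]
        have : ¬ Nat.Coprime a p := by
          intro h
          exact hc (Nat.Coprime.pow_right _ h)
        simp only [if_neg this, mul_zero]
    rw [Finset.sum_congr rfl hterm, ← Finset.mul_sum]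
    congr 1
    apply sum_Icc_eq_range _ hq0
    have h1 : ¬ Nat.Coprime (p^(2*l+1)) p := by
      intro h
      exact (hcond _).1 h (dvd_pow_self p (Nat.succ_ne_zero (2*l)))
    have h2 : ¬ Nat.Coprime 0 p := by
      intro h
      exact (hcond 0).1 h (dvd_zero p)
    simp only [hfdef, if_neg h1, if_neg h2]
  -- Step 2 : periodicity
  have hper : ∀ b : ℕ, f (b + p) = f b := by
    intro b
    have hgP : g (b + p) = g b := by
      rw [hgdef]
      simp only
      have hS : S p (((b + p : ℕ)):ℤ) = S p (b:ℤ) := by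
        rw [show (((b + p:ℕ)):ℤ) = (b:ℤ) + (p:ℤ) by push_cast; ring]
        exact S_period p hp0 (b:ℤ)
      have hE : ep p (-((m:ℤ) * ((b + p : ℕ):ℤ))) = ep p (-((m:ℤ) * b)) := by
        rw [show -((m:ℤ) * ((b + p : ℕ):ℤ)) = -((m:ℤ) * b) + (p:ℤ) * (-(m:ℤ)) by push_cast; ring,
          ep_add, ep_qmul, mul_one]
      rw [hS, hE]
    have hcP : Nat.Coprime (b + p) p ↔ Nat.Coprime b p := Nat.coprime_add_self_left
    rw [hfdef]
    simp only
    by_cases hb : Nat.Coprime b p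
    · rw [if_pos (hcP.2 hb), if_pos hb, hgP]
    · rw [if_neg (fun h => hb (hcP.1 h)), if_neg hb]
  have hstep2 : ∑ b ∈ range (p^(2*l+1)), f b = ((p^(2*l) : ℕ) : ℂ) * ∑ b ∈ range p, f b := by
    rw [show p^(2*l+1) = p^(2*l) * p from pow_succ p (2*l)]
    exact sum_range_mul_periodic p (p^(2*l)) f hper
  -- Step 3 : remove b = 0
  have hg0 : g 0 = (p:ℂ)^3 := by
    rw [hgdef]
    simp only [Nat.cast_zero, mul_zero, neg_zero, ep_zero, mul_one]
    have hS0 : S p (0:ℤ) = (p:ℂ) := by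
      rw [S]
      simp only [Int.cast_zero, zero_mul, zero_div]
      rw [show e 0 = 1 by simp [e]]
      simp [Nat.card_Icc]
    rw [hS0]
  have hstep3 : ∑ b ∈ range p, f b = (∑ b ∈ range p, g b) - (p:ℂ)^3 := by
    have hpt : ∀ b : ℕ, f b = g b - (if p ∣ b then g b else 0) := by
      intro b
      by_cases hb : p ∣ b
      · rw [if_pos hb, hfdef]
        simp only [if_neg (fun h => (hcond b).1 h hb)]
        ring
      · rw [if_neg hb, hfdef]
        simp only [if_pos ((hcond b).2 hb)]
        ring
    rw [Finset.sum_congr rfl (fun b _ => hpt b), Finset.sum_sub_distrib]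
    congr 1
    rw [← Finset.sum_filter]
    have hfil : (range p).filter (fun b => p ∣ b) = {0} := by
      ext b
      simp only [Finset.mem_filter, Finset.mem_range, Finset.mem_singleton]
      constructor
      · rintro ⟨h1, h2⟩; exact Nat.eq_zero_of_dvd_of_lt h2 h1
      · rintro rfl; exact ⟨hp0, dvd_zero p⟩
    rw [hfil, Finset.sum_singleton, hg0]
  -- Step 4 : evaluate the sum over b
  have hstep4 : ∑ b ∈ range p, g b = (p:ℂ) * (Tcount p (m:ℤ) : ℂ) := by
    have h1 : ∀ b ∈ range p, g b = ∑ x ∈ range p ×ˢ range p ×ˢ range p,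
        ep p ((((x.1:ℤ)^2 + (x.2.1:ℤ)^2 + (x.2.2:ℤ)^2) - (m:ℤ)) * (b:ℤ)) := by
      intro b _
      rw [hgdef]
      simp only
      rw [S_eq_range p hp0, sum_cube, Finset.sum_mul]
      apply Finset.sum_congr rfl
      intro x _
      rw [← ep_add, ← ep_add, ← ep_add]
      congr 1
      -- push_cast not needed
      ring
    rw [Finset.sum_congr rfl h1, Finset.sum_comm]
    have h2 : ∀ x ∈ range p ×ˢ range p ×ˢ range p,
        ∑ b ∈ range p, ep p ((((x.1:ℤ)^2 + (x.2.1:ℤ)^2 + (x.2.2:ℤ)^2) - (m:ℤ)) * (b:ℤ))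
        = if (p:ℤ) ∣ (((x.1:ℤ)^2 + (x.2.1:ℤ)^2 + (x.2.2:ℤ)^2) - (m:ℤ)) then (p:ℂ) else 0 := by
      intro x _
      exact sum_ep_mul p hp0 _
    rw [Finset.sum_congr rfl h2, Finset.sum_ite, Finset.sum_const_zero, add_zero,
      Finset.sum_const, nsmul_eq_mul, count_eq_Tcount p hp0 (m:ℤ)]
    ring
  -- Step 5 : combine
  have hC : Cst * ((p^(2*l) : ℕ) : ℂ) = (p:ℂ)^(-(l:ℤ)-3) := by
    rw [hCdef]
    push_cast
    rw [← zpow_natCast (p:ℂ) (2*l+1), ← zpow_mul, ← pow_mul, ← zpow_natCast (p:ℂ) (l*3),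
      ← zpow_natCast (p:ℂ) (2*l), ← zpow_add₀ hpC, ← zpow_add₀ hpC]
    congr 1
    push_cast
    ring
  rw [hstep1, hstep2, hstep3, hstep4, ← hC]
  ring
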